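/- Let f : Ω → Y be a C^k function on an open set Ω ⊆ X containing the parallelepiped {x + t·u : t ∈ [0,1]^k}, where u = (u₁,…,u_k) ∈ X^k. Then Δ^k_u f(x) = ∫_{[0,1]^k} D^k f(x + t·u)(u₁,…,u_k) dt, where D^k f denotes the k-th Fréchet derivative. -/

import Mathlib

open Finset MeasureTheory

section aux
variable {𝕜 : Type*} [NontriviallyNormedField 𝕜] {E F : Type*}
  [NormedAddCommGroup E] [NormedSpace 𝕜 E] [NormedAddCommGroup F] [NormedSpace 𝕜 F]

lemma fderiv_comp_add_right' (h : E → F) (a x : E) :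
    fderiv 𝕜 (fun z => h (z + a)) x = fderiv 𝕜 h (x + a) := by
  by_cases H : DifferentiableAt 𝕜 h (x + a)
  · have h1 : HasFDerivAt (fun z : E => z + a) (ContinuousLinearMap.id 𝕜 E) x :=
      (hasFDerivAt_id x).add_const a
    have := (H.hasFDerivAt.comp x h1).fderiv
    simpa [Function.comp_def] using this
  · rw [fderiv_zero_of_not_differentiableAt H, fderiv_zero_of_not_differentiableAt]
    intro H'
    apply H
    have h2 : DifferentiableAt 𝕜 (fun w : E => w - a) (x + a) :=
      (differentiableAt_id.sub_const a)
    have H2 : DifferentiableAt 𝕜 ((fun z => h (z + a)) ∘ (fun w : E => w - a)) (x + a) :=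
      DifferentiableAt.comp (x + a) (by simpa using H') h2
    simpa [Function.comp_def, sub_add_cancel] using H2

lemma iteratedFDeriv_comp_add_right_aux (n : ℕ) (f : E → F) (a : E) (x : E) :
    iteratedFDeriv 𝕜 n (fun z => f (z + a)) x = iteratedFDeriv 𝕜 n f (x + a) := by
  induction n generalizing x with
  | zero => ext m; simp
  | succ n ih =>
    rw [iteratedFDeriv_succ_eq_comp_left, iteratedFDeriv_succ_eq_comp_left]
    have : iteratedFDeriv 𝕜 n (fun z => f (z + a)) = fun y => iteratedFDeriv 𝕜 n f (y + a) :=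
      funext ih
    simp only [Function.comp_apply, this]
    rw [fderiv_comp_add_right' (iteratedFDeriv 𝕜 n f) a x]
end aux

/-- The finite difference of order `k`:
`Δ^k_u f (x) = ∑_{α ∈ {0,1}^k} (-1)^{k-|α|} f (x + α·u)`. -/
def fdiff {X Y : Type*} [AddCommGroup X] [AddCommGroup Y] {k : ℕ}
    (u : Fin k → X) (f : X → Y) (x : X) : Y :=
  ∑ α : Fin k → Bool,
    ((-1 : ℤ) ^ (k - (Finset.univ.filter fun i => α i).card)) •
      f (x + ∑ i, if α i then u i else 0)

lemma fdiff_succ {X Y : Type*} [AddCommGroup X] [AddCommGroup Y] {k : ℕ}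
    (u : Fin (k+1) → X) (f : X → Y) (x : X) :
    fdiff u f x = fdiff (Fin.tail u) (fun y => f (y + u 0) - f y) x := by
  classical
  have key := Equiv.sum_comp (Fin.consEquiv (fun _ : Fin (k+1) => Bool))
      (fun α : Fin (k+1) → Bool => ((-1 : ℤ) ^ (k + 1 - (Finset.univ.filter fun i => α i).card)) •
          f (x + ∑ i, if α i then u i else 0))
  rw [fdiff, ← key, Fintype.sum_prod_type, Fintype.sum_bool]
  simp only [Fin.consEquiv_apply]
  have hcard : ∀ (b : Bool) (β : Fin k → Bool),
      (univ.filter fun i => (Fin.cons b β : Fin (k+1) → Bool) i).card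
        = (if b then 1 else 0) + (univ.filter fun i => β i).card := by
    intro b β
    rw [Finset.card_filter, Finset.card_filter, Fin.sum_univ_succ]
    simp
  have hle : ∀ β : Fin k → Bool, (univ.filter fun i => β i).card ≤ k := fun β =>
    le_trans (Finset.card_filter_le _ _) (by simp)
  have hT : ∀ β : Fin k → Bool,
      ((-1 : ℤ) ^ (k + 1 - (univ.filter fun i =>
          (Fin.cons true β : Fin (k+1) → Bool) i).card)) •
        f (x + ∑ i, if (Fin.cons true β : Fin (k+1) → Bool) i then u i else 0)
      = ((-1 : ℤ) ^ (k - (univ.filter fun i => β i).card)) •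
        f ((x + ∑ i, if β i then Fin.tail u i else 0) + u 0) := by
    intro β
    have h2 : k + 1 - ((univ.filter fun i => (Fin.cons true β : Fin (k+1) → Bool) i).card)
        = k - (univ.filter fun i => β i).card := by
      rw [hcard]; simp; omega
    rw [h2]
    congr 1
    rw [Fin.sum_univ_succ]
    simp [Fin.tail]
    abel
  have hF : ∀ β : Fin k → Bool,
      ((-1 : ℤ) ^ (k + 1 - (univ.filter fun i =>
          (Fin.cons false β : Fin (k+1) → Bool) i).card)) •
        f (x + ∑ i, if (Fin.cons false β : Fin (k+1) → Bool) i then u i else 0)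
      = -(((-1 : ℤ) ^ (k - (univ.filter fun i => β i).card)) •
        f (x + ∑ i, if β i then Fin.tail u i else 0)) := by
    intro β
    have h2 : k + 1 - ((univ.filter fun i => (Fin.cons false β : Fin (k+1) → Bool) i).card)
        = (k - (univ.filter fun i => β i).card) + 1 := by
      rw [hcard]; have := hle β; simp; omega
    rw [h2, pow_succ, mul_neg_one, neg_smul, neg_inj]
    congr 2
    rw [Fin.sum_univ_succ]
    simp [Fin.tail]
  rw [Finset.sum_congr rfl (fun β _ => hT β), Finset.sum_congr rfl (fun β _ => hF β),
    Finset.sum_neg_distrib, fdiff, ← sub_eq_add_neg, ← Finset.sum_sub_distrib]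
  simp only [smul_sub]

section main

variable {d : ℕ} {Y : Type*} [NormedAddCommGroup Y] [NormedSpace ℝ Y] [CompleteSpace Y]

local notation "X" => EuclideanSpace ℝ (Fin d)

lemma cons_mem_Icc {k : ℕ} {s : ℝ} {t : Fin k → ℝ} (hs : s ∈ Set.Icc (0:ℝ) 1)
    (ht : t ∈ Set.Icc (0 : Fin k → ℝ) 1) :
    (Fin.cons s t : Fin (k+1) → ℝ) ∈ Set.Icc (0 : Fin (k+1) → ℝ) 1 := by
  obtain ⟨h1, h2⟩ := ht
  constructor <;> intro i <;> induction i using Fin.cases <;>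
    simp_all [Pi.le_def, Fin.cons_zero, Fin.cons_succ] <;> first | exact hs.1 | exact hs.2

lemma sum_cons_smul {k : ℕ} (s : ℝ) (t : Fin k → ℝ) (u : Fin (k+1) → X) :
    ∑ i, (Fin.cons s t : Fin (k+1) → ℝ) i • u i = s • u 0 + ∑ i, t i • Fin.tail u i := by
  rw [Fin.sum_univ_succ]
  simp [Fin.tail]

set_option maxHeartbeats 1000000 in
theorem main_aux (k : ℕ) : ∀ (Ω : Set X), IsOpen Ω →
    ∀ (f : X → Y), ContDiffOn ℝ k f Ω →
    ∀ (x : X) (u : Fin k → X),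
    (∀ t ∈ Set.Icc (0 : Fin k → ℝ) 1, x + ∑ i, t i • u i ∈ Ω) →
    fdiff u f x =
      ∫ t in Set.Icc (0 : Fin k → ℝ) 1,
        iteratedFDeriv ℝ k f (x + ∑ i, t i • u i) u := by
  induction k with
  | zero =>
    intro Ω hΩ f hf x u hpar
    have h0 : fdiff u f x = f x := by
      rw [fdiff]
      rw [Fintype.sum_eq_single (fun _ : Fin 0 => true) (fun β hβ => absurd (Subsingleton.elim _ _) hβ)]
      simp
    have h1 : ∀ t : Fin 0 → ℝ, iteratedFDeriv ℝ 0 f (x + ∑ i, t i • u i) u = f x := by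
      intro t
      rw [iteratedFDeriv_zero_apply]
      congr 1
      simp
    rw [h0]
    rw [integral_congr_ae (Filter.Eventually.of_forall (fun t => h1 t))]
    rw [setIntegral_const]
    have hv : volume (Set.Icc (0 : Fin 0 → ℝ) 1) = 1 := by
      rw [Real.volume_Icc_pi]; simp
    rw [measureReal_def, hv]
    simp
  | succ k IH =>
    intro Ω hΩ f hf x u hpar
    set v := u 0 with hv
    set w := Fin.tail u with hw
    -- the shifted set and function
    set Ω' : Set X := Ω ∩ (fun y => y + v) ⁻¹' Ω with hΩ'def
    have hΩ' : IsOpen Ω' := hΩ.inter ((continuous_add_right v).isOpen_preimage _ hΩ)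
    set g : X → Y := fun y => f (y + v) - f y with hgdef
    have htrans : ContDiffOn ℝ (k+1 : ℕ) (fun y : X => f (y + v)) ((fun y => y + v) ⁻¹' Ω) := by
      apply hf.comp (((contDiff_id.add contDiff_const).contDiffOn))
      exact Set.mapsTo_preimage _ _
    have hg : ContDiffOn ℝ k g Ω' := by
      apply ContDiffOn.sub
      · exact (htrans.mono Set.inter_subset_right).of_le (by exact_mod_cast Nat.le_succ k)
      · exact (hf.mono Set.inter_subset_left).of_le (by exact_mod_cast Nat.le_succ k)
    -- membership facts
    have hmem : ∀ s ∈ Set.Icc (0:ℝ) 1, ∀ t ∈ Set.Icc (0 : Fin k → ℝ) 1,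
        (x + ∑ i, t i • w i) + s • v ∈ Ω := by
      intro s hs t ht
      have := hpar (Fin.cons s t) (cons_mem_Icc hs ht)
      rw [sum_cons_smul] at this
      convert this using 1
      rw [← hv, ← hw]
      abel_nf
    have hpar' : ∀ t ∈ Set.Icc (0 : Fin k → ℝ) 1, x + ∑ i, t i • w i ∈ Ω' := by
      intro t ht
      constructor
      · have := hmem 0 (by norm_num) t ht; simpa using this
      · have := hmem 1 (by norm_num) t ht; simpa using this
    -- continuity and differentiability of iterated derivatives on Ω
    have hcont : ContinuousOn (iteratedFDeriv ℝ (k+1) f) Ω := by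
      have h1 := hf.continuousOn_iteratedFDerivWithin (m := k+1) (by norm_num) hΩ.uniqueDiffOn
      exact h1.congr fun p hp => (iteratedFDerivWithin_of_isOpen (k+1) hΩ hp).symm
    have hdiff : ∀ p ∈ Ω, DifferentiableAt ℝ (iteratedFDeriv ℝ k f) p := by
      intro p hp
      have h1 : DifferentiableWithinAt ℝ (iteratedFDerivWithin ℝ k f Ω) Ω p :=
        hf.differentiableOn_iteratedFDerivWithin (m := k) (by exact_mod_cast Nat.lt_succ_self k)
          hΩ.uniqueDiffOn p hp
      have h2 := h1.differentiableAt (hΩ.mem_nhds hp)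
      apply h2.congr_of_eventuallyEq
      filter_upwards [hΩ.mem_nhds hp] with y hy
      exact (iteratedFDerivWithin_of_isOpen k hΩ hy).symm
    -- step A and IH
    rw [fdiff_succ, ← hv, ← hw, ← hgdef, IH Ω' hΩ' g hg x w hpar']
    -- pointwise: inner FTC
    have hpoint : ∀ t ∈ Set.Icc (0 : Fin k → ℝ) 1,
        iteratedFDeriv ℝ k g (x + ∑ i, t i • w i) w =
        ∫ s in Set.Icc (0:ℝ) 1,
          iteratedFDeriv ℝ (k+1) f ((x + ∑ i, t i • w i) + s • v) u := by
      intro t ht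
      set z : X := x + ∑ i, t i • w i with hz
      have hzΩ' : z ∈ Ω' := hpar' t ht
      have hseg : ∀ s ∈ Set.Icc (0:ℝ) 1, z + s • v ∈ Ω := fun s hs => hmem s hs t ht
      -- (b) difference of iterated derivatives
      have e1 : iteratedFDeriv ℝ k g z w =
          iteratedFDeriv ℝ k f (z + v) w - iteratedFDeriv ℝ k f z w := by
        have hA : ContDiffOn ℝ k (fun y : X => f (y + v)) Ω' :=
          (htrans.mono Set.inter_subset_right).of_le (by exact_mod_cast Nat.le_succ k)
        have hB : ContDiffOn ℝ k (-f) Ω' :=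
          ((hf.mono Set.inter_subset_left).of_le (by exact_mod_cast Nat.le_succ k)).neg
        have e0 : g = fun y => (fun y : X => f (y + v)) y + (-f) y := by
          funext y; simp [hgdef, sub_eq_add_neg]
        calc iteratedFDeriv ℝ k g z w = iteratedFDerivWithin ℝ k g Ω' z w := by
              rw [iteratedFDerivWithin_of_isOpen k hΩ' hzΩ']
          _ = (iteratedFDerivWithin ℝ k (fun y : X => f (y + v)) Ω' z
              + iteratedFDerivWithin ℝ k (-f) Ω' z) w := by
              rw [e0, iteratedFDerivWithin_add_apply' (hA z hzΩ') (hB z hzΩ') hΩ'.uniqueDiffOn hzΩ']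
          _ = iteratedFDerivWithin ℝ k (fun y : X => f (y + v)) Ω' z w
              - iteratedFDerivWithin ℝ k f Ω' z w := by
              rw [iteratedFDerivWithin_neg_apply hΩ'.uniqueDiffOn hzΩ']
              simp [sub_eq_add_neg]
          _ = iteratedFDeriv ℝ k (fun y : X => f (y + v)) z w - iteratedFDeriv ℝ k f z w := by
              rw [iteratedFDerivWithin_of_isOpen (f := fun y : X => f (y + v)) k hΩ' hzΩ',
                iteratedFDerivWithin_of_isOpen (f := f) k hΩ' hzΩ']
          _ = iteratedFDeriv ℝ k f (z + v) w - iteratedFDeriv ℝ k f z w := by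
              rw [iteratedFDeriv_comp_add_right_aux k f v z]
      -- (c) FTC
      have e2 : iteratedFDeriv ℝ k f (z + v) w - iteratedFDeriv ℝ k f z w =
          ∫ s in Set.Icc (0:ℝ) 1, iteratedFDeriv ℝ (k+1) f (z + s • v) u := by
        have hψder : ∀ s ∈ Set.uIcc (0:ℝ) 1,
            HasDerivAt (fun s : ℝ => iteratedFDeriv ℝ k f (z + s • v) w)
              (iteratedFDeriv ℝ (k+1) f (z + s • v) u) s := by
          intro s hs
          rw [Set.uIcc_of_le zero_le_one] at hs
          have hp : z + s • v ∈ Ω := hseg s hs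
          have h1 := (hdiff _ hp).hasFDerivAt
          have h2 : HasDerivAt (fun s : ℝ => z + s • v) v s := by
            simpa using ((hasDerivAt_id s).smul_const v).const_add z
          have h3 := h1.comp_hasDerivAt s h2
          have h4 := ((ContinuousMultilinearMap.apply ℝ
              (fun _ : Fin k => X) Y w).hasFDerivAt).comp_hasDerivAt s h3
          have h5 : iteratedFDeriv ℝ (k+1) f (z + s • v) u
              = (ContinuousMultilinearMap.apply ℝ (fun _ : Fin k => X) Y w)
                  ((fderiv ℝ (iteratedFDeriv ℝ k f) (z + s • v)) v) := by
            rw [iteratedFDeriv_succ_apply_left]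
            rfl
          rw [h5]
          exact h4
        have hcont1 : ContinuousOn
            (fun s : ℝ => iteratedFDeriv ℝ (k+1) f (z + s • v) u) (Set.uIcc (0:ℝ) 1) := by
          rw [Set.uIcc_of_le zero_le_one]
          have hinner : ContinuousOn (fun s : ℝ => iteratedFDeriv ℝ (k+1) f (z + s • v))
              (Set.Icc (0:ℝ) 1) :=
            hcont.comp ((continuous_const.add (continuous_id.smul continuous_const) : Continuous fun s : ℝ => z + s • v).continuousOn) hseg
          exact ((ContinuousMultilinearMap.apply ℝ
            (fun _ : Fin (k+1) => X) Y u).continuous).comp_continuousOn hinner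
        have hint : IntervalIntegrable (fun s : ℝ => iteratedFDeriv ℝ (k+1) f (z + s • v) u)
            volume 0 1 := hcont1.intervalIntegrable
        have hftc := intervalIntegral.integral_eq_sub_of_hasDerivAt hψder hint
        rw [intervalIntegral.integral_of_le zero_le_one] at hftc
        rw [integral_Icc_eq_integral_Ioc, hftc]
        norm_num
      rw [e1, e2]
    rw [setIntegral_congr_fun measurableSet_Icc hpoint]
    -- Fubini
    set A := Set.Icc (0:ℝ) 1 with hA
    set B := Set.Icc (0 : Fin k → ℝ) 1 with hB
    set G : ℝ × (Fin k → ℝ) → Y :=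
      fun p => iteratedFDeriv ℝ (k+1) f ((x + ∑ i, p.2 i • w i) + p.1 • v) u with hG
    have hGcont : ContinuousOn G (A ×ˢ B) := by
      have hmaps : Set.MapsTo (fun p : ℝ × (Fin k → ℝ) => (x + ∑ i, p.2 i • w i) + p.1 • v)
          (A ×ˢ B) Ω := by
        rintro ⟨s, t⟩ ⟨hs, ht⟩
        exact hmem s hs t ht
      have hinner : ContinuousOn (fun p : ℝ × (Fin k → ℝ) =>
          iteratedFDeriv ℝ (k+1) f ((x + ∑ i, p.2 i • w i) + p.1 • v)) (A ×ˢ B) :=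
        hcont.comp (((continuous_const.add (continuous_finset_sum _ fun i _ =>
            ((continuous_apply i).comp continuous_snd).smul continuous_const)).add
            (continuous_fst.smul continuous_const) : Continuous fun p : ℝ × (Fin k → ℝ) =>
          (x + ∑ i, p.2 i • w i) + p.1 • v).continuousOn) hmaps
      exact ((ContinuousMultilinearMap.apply ℝ
        (fun _ : Fin (k+1) => X) Y u).continuous).comp_continuousOn hinner
    have hGint : IntegrableOn G (A ×ˢ B) := by
      exact hGcont.integrableOn_compact (isCompact_Icc.prod isCompact_Icc)
    have hGint2 : Integrable G ((volume.restrict A).prod (volume.restrict B)) := by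
      rwa [Measure.prod_restrict, ← Measure.volume_eq_prod]
    have hswap : (∫ t in B, ∫ s in A, G (s, t)) = ∫ s in A, ∫ t in B, G (s, t) := by
      exact (MeasureTheory.integral_integral_swap (f := fun s t => G (s, t)) hGint2).symm
    calc (∫ t in B, ∫ s in A,
            iteratedFDeriv ℝ (k+1) f ((x + ∑ i, t i • w i) + s • v) u)
        = ∫ s in A, ∫ t in B, G (s, t) := hswap
      _ = ∫ p, G p ∂((volume.restrict A).prod (volume.restrict B)) :=
          (MeasureTheory.integral_prod G hGint2).symm
      _ = ∫ p in A ×ˢ B, G p := by rw [Measure.prod_restrict, ← Measure.volume_eq_prod]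
      _ = ∫ τ in Set.Icc (0 : Fin (k+1) → ℝ) 1,
            iteratedFDeriv ℝ (k+1) f (x + ∑ i, τ i • u i) u := by
          have hmp := (MeasureTheory.volume_preserving_piFinSuccAbove
            (fun _ : Fin (k+1) => ℝ) 0).symm
          have hkey := hmp.setIntegral_preimage_emb
            (MeasurableEquiv.measurableEmbedding _)
            (fun τ => iteratedFDeriv ℝ (k+1) f (x + ∑ i, τ i • u i) u)
            (Set.Icc 0 1)
          rw [← hkey]
          have hsymm : ∀ p : ℝ × (Fin k → ℝ),
              (MeasurableEquiv.piFinSuccAbove (fun _ : Fin (k+1) => ℝ) 0).symm p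
                = (Fin.cons p.1 p.2 : Fin (k+1) → ℝ) := by
            intro p
            show (Fin.insertNthEquiv (fun _ : Fin (k+1) => ℝ) 0) p = _
            simp [Fin.insertNthEquiv, Fin.insertNth_zero']
          have hpre : (MeasurableEquiv.piFinSuccAbove (fun _ : Fin (k+1) => ℝ) 0).symm ⁻¹'
              (Set.Icc 0 1) = A ×ˢ B := by
            ext p
            simp only [Set.mem_preimage, hsymm, Set.mem_prod]
            constructor
            · intro ⟨h1, h2⟩
              exact ⟨⟨by simpa using h1 0, by simpa using h2 0⟩,
                ⟨fun i => by simpa using h1 i.succ, fun i => by simpa using h2 i.succ⟩⟩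
            · rintro ⟨hs, ht⟩
              exact cons_mem_Icc hs ht
          rw [hpre]
          apply setIntegral_congr_fun (measurableSet_Icc.prod measurableSet_Icc)
          intro p _
          simp only [hsymm, sum_cons_smul]
          show G p = _
          rw [hG]
          beta_reduce
          congr 2
          abel

end main

theorem fdiff_eq_integral_iteratedFDeriv {d : ℕ}
    {Y : Type*} [NormedAddCommGroup Y] [NormedSpace ℝ Y] [CompleteSpace Y]
    {k : ℕ} (Ω : Set (EuclideanSpace ℝ (Fin d))) (hΩ : IsOpen Ω)
    (f : EuclideanSpace ℝ (Fin d) → Y) (hf : ContDiffOn ℝ k f Ω)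
    (x : EuclideanSpace ℝ (Fin d)) (u : Fin k → EuclideanSpace ℝ (Fin d))
    (hpar : ∀ t ∈ Set.Icc (0 : Fin k → ℝ) 1, x + ∑ i, t i • u i ∈ Ω) :
    fdiff u f x =
      ∫ t in Set.Icc (0 : Fin k → ℝ) 1,
        iteratedFDeriv ℝ k f (x + ∑ i, t i • u i) u :=
  main_aux k Ω hΩ f hf x u hpar
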